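/- arXiv:2205.12077 — 3 statements merged into one kernel-verified Lean document; each statement's English description precedes it below -/
import Mathlib

section
/- Assume λ = 0 and δ > 1, and let (β*, τ*) be the unique saddle point of max_{β ≥ 0} min_{τ > 0} D(β,τ). Then τ* is the unique τ > 0 solving the equation τ²·δ − ρ = 2P·Pr[H ≥ √P/τ] + τ²·E[H²·1{−√P/τ ≤ H ≤ √P/τ}]; moreover β* = max(0, τ*·δ + ρ/τ* + 2·Ỹ(τ*)), where Ỹ(τ) := τ·(E[(H − √P/τ)²·1{H ≥ √P/τ}] − 1/2), and the optimal value of the max–min problem equals (max(0, τ*·δ/2 + ρ/(2τ*) + Ỹ(τ*)))². -/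
open MeasureTheory ProbabilityTheory Filter

noncomputable section

/-- Standard Gaussian `N(0,1)` measure on `ℝ`. -/
def stdGaussian : Measure ℝ := ProbabilityTheory.gaussianReal 0 1

/-- `Yfun P lam β τ = (β/α)·(E[(H − √P·α)²·1{H ≥ √P·α}] − 1/2)` with `α = 1/τ + 2λ/β`. -/
def Yfun (P lam β τ : ℝ) : ℝ :=
  (β / (1 / τ + 2 * lam / β)) *
    ((∫ h in Set.Ici (Real.sqrt P * (1 / τ + 2 * lam / β)),
        (h - Real.sqrt P * (1 / τ + 2 * lam / β)) ^ 2 ∂stdGaussian) - 1 / 2)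

/-- `D(β,τ) = τβδ/2 + ρβ/(2τ) − β²/4 + Y(β,τ)`, with the convention `D(0,τ) = 0`. -/
def Dfun (δ ρ P lam β τ : ℝ) : ℝ :=
  if β = 0 then 0
  else τ * β * δ / 2 + ρ * β / (2 * τ) - β ^ 2 / 4 + Yfun P lam β τ

/-- `(βs, τs)` is a saddle point of `max_{β ≥ 0} min_{τ > 0} D(β, τ)`:
`D(β,τs) ≤ D(βs,τs) ≤ D(βs,τ)` for all `β ≥ 0` and `τ > 0`. -/
def IsSaddle (δ ρ P lam βs τs : ℝ) : Prop :=
  0 ≤ βs ∧ 0 < τs ∧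
  (∀ β, 0 ≤ β → Dfun δ ρ P lam β τs ≤ Dfun δ ρ P lam βs τs) ∧
  (∀ τ, 0 < τ → Dfun δ ρ P lam βs τs ≤ Dfun δ ρ P lam βs τ)

end

noncomputable section

/-- `Ỹ(τ) = τ·(E[(H − √P/τ)²·1{H ≥ √P/τ}] − 1/2)`. -/
def Ytilde (P τ : ℝ) : ℝ :=
  τ * ((∫ h in Set.Ici (Real.sqrt P / τ), (h - Real.sqrt P / τ) ^ 2 ∂stdGaussian) - 1 / 2)

end


open Set Real

noncomputable def gp (x : ℝ) : ℝ := (Real.sqrt (2 * Real.pi))⁻¹ * Real.exp (-x ^ 2 / 2)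

lemma gp_eq_pdf : gaussianPDFReal 0 1 = gp := by
  ext x; simp [gaussianPDFReal, gp]

lemma gp_pos (x : ℝ) : 0 < gp x := by
  have h : 0 < Real.sqrt (2 * Real.pi) := Real.sqrt_pos.2 (by positivity)
  unfold gp; positivity

lemma continuous_gp : Continuous gp := by
  unfold gp; fun_prop

lemma hasDerivAt_gp (x : ℝ) : HasDerivAt gp (-x * gp x) x := by
  have h : HasDerivAt (fun x : ℝ => -x ^ 2 / 2) (-x) x := by
    have := ((hasDerivAt_pow 2 x).neg).div_const 2
    exact this.congr_deriv (by simp; ring)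
  have := (h.exp).const_mul (Real.sqrt (2 * Real.pi))⁻¹
  exact this.congr_deriv (by unfold gp; ring)

lemma integrable_gp : Integrable gp := by
  have := (integrable_exp_neg_mul_sq (by norm_num : (0:ℝ) < 1/2)).const_mul (Real.sqrt (2 * Real.pi))⁻¹
  convert this using 2 with x; unfold gp; ring_nf

lemma integrable_xgp : Integrable (fun x => x * gp x) := by
  have := (integrable_mul_exp_neg_mul_sq (by norm_num : (0:ℝ) < 1/2)).const_mul (Real.sqrt (2 * Real.pi))⁻¹
  convert this using 2 with x; unfold gp; ring_nf

lemma integrable_x2gp : Integrable (fun x => x ^ 2 * gp x) := by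
  have h := (integrable_rpow_mul_exp_neg_mul_sq (by norm_num : (0:ℝ) < 1/2) (s := 2) (by norm_num)).const_mul (Real.sqrt (2 * Real.pi))⁻¹
  convert h using 2 with x
  rw [show ((2:ℝ)) = ((2:ℕ):ℝ) by norm_num, Real.rpow_natCast]
  unfold gp; ring_nf

lemma tendsto_gp_atTop : Tendsto gp atTop (nhds 0) := by
  have h1 : Tendsto (fun x : ℝ => -x ^ 2 / 2) atTop atBot := by
    apply Tendsto.atBot_div_const (by norm_num : (0:ℝ) < 2)
    exact tendsto_neg_atBot_iff.mpr (tendsto_pow_atTop (by norm_num))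
  have := (Real.tendsto_exp_atBot.comp h1).const_mul (Real.sqrt (2 * Real.pi))⁻¹
  unfold gp
  simpa only [Function.comp_def, mul_zero] using this

lemma tendsto_xgp_atTop : Tendsto (fun x => x * gp x) atTop (nhds 0) := by
  have hg : Tendsto (fun x : ℝ => (Real.sqrt (2 * Real.pi))⁻¹ * (x * Real.exp (-x))) atTop (nhds 0) := by
    have := (tendsto_pow_mul_exp_neg_atTop_nhds_zero 1).const_mul (Real.sqrt (2 * Real.pi))⁻¹
    simpa using this
  apply squeeze_zero' _ _ hg
  · filter_upwards [eventually_ge_atTop (0:ℝ)] with x hx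
    exact mul_nonneg hx (gp_pos x).le
  · filter_upwards [eventually_ge_atTop (2:ℝ)] with x hx
    have hx0 : (0:ℝ) ≤ x := by linarith
    have hexp : Real.exp (-x ^ 2 / 2) ≤ Real.exp (-x) := by
      apply Real.exp_le_exp.2; nlinarith
    have hs : (0:ℝ) ≤ (Real.sqrt (2 * Real.pi))⁻¹ := by positivity
    calc x * gp x = (Real.sqrt (2 * Real.pi))⁻¹ * (x * Real.exp (-x ^ 2 / 2)) := by unfold gp; ring
    _ ≤ (Real.sqrt (2 * Real.pi))⁻¹ * (x * Real.exp (-x)) := by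
        apply mul_le_mul_of_nonneg_left _ hs
        exact mul_le_mul_of_nonneg_left hexp hx0


noncomputable def Qf (a : ℝ) : ℝ := ∫ x in Set.Ioi a, gp x

lemma gp_even (x : ℝ) : gp (-x) = gp x := by unfold gp; rw [neg_pow]; ring_nf

-- conversion of set integrals
lemma std_setIntegral (f : ℝ → ℝ) {s : Set ℝ} (hs : MeasurableSet s) :
    ∫ x in s, f x ∂stdGaussian = ∫ x in s, gp x * f x := by
  rw [_root_.stdGaussian, gaussianReal_of_var_ne_zero _ one_ne_zero]
  have hpdf : (gaussianPDF 0 1) = fun x => ((gp x).toNNReal : ENNReal) := by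
    ext x; rw [gaussianPDF, gp_eq_pdf]; rfl
  rw [hpdf, setIntegral_withDensity_eq_setIntegral_smul
    (continuous_gp.measurable.real_toNNReal) f hs]
  congr 1; ext x
  rw [NNReal.smul_def, smul_eq_mul, Real.coe_toNNReal _ (gp_pos x).le]

lemma std_measure (s : Set ℝ) : (stdGaussian s).toReal = ∫ x in s, gp x := by
  rw [_root_.stdGaussian, gaussianReal_apply_eq_integral _ one_ne_zero, gp_eq_pdf,
    ENNReal.toReal_ofReal (setIntegral_nonneg_of_ae (Eventually.of_forall fun x => (gp_pos x).le))]

lemma std_measure_Ici (a : ℝ) : (stdGaussian (Set.Ici a)).toReal = Qf a := by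
  rw [std_measure, Qf]
  exact (setIntegral_congr_set Ioi_ae_eq_Ici).symm

lemma hasDerivAt_Qf (a : ℝ) : HasDerivAt Qf (-(gp a)) a := by
  have key : Qf = fun b => ((∫ x, gp x) - ∫ x in Set.Iic (0:ℝ), gp x) - ∫ x in (0:ℝ)..b, gp x := by
    funext b
    have h1 : (∫ x in Set.Iic b, gp x) + ∫ x in Set.Ioi b, gp x = ∫ x, gp x := by
      rw [← integral_add_compl (measurableSet_Iic) integrable_gp, compl_Iic]
    have h2 : (∫ x in Set.Iic b, gp x) - ∫ x in Set.Iic (0:ℝ), gp x = ∫ x in (0:ℝ)..b, gp x :=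
      intervalIntegral.integral_Iic_sub_Iic integrable_gp.integrableOn integrable_gp.integrableOn
    unfold Qf; linarith
  rw [key]
  have hD : HasDerivAt (fun b => ∫ x in (0:ℝ)..b, gp x) (gp a) a :=
    intervalIntegral.integral_hasDerivAt_right integrable_gp.intervalIntegrable
      (continuous_gp.stronglyMeasurableAtFilter _ _) continuous_gp.continuousAt
  simpa using (hasDerivAt_const a _).fun_sub hD

lemma M1_eq (a : ℝ) : ∫ x in Set.Ioi a, x * gp x = gp a := by
  have := integral_Ioi_of_hasDerivAt_of_tendsto' (a := a) (m := 0)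
    (f := fun x => -gp x) (f' := fun x => x * gp x)
    (fun x _ => by simpa using (hasDerivAt_gp x).fun_neg)
    integrable_xgp.integrableOn (by simpa using tendsto_gp_atTop.neg)
  simpa using this

lemma M2_eq (a : ℝ) : ∫ x in Set.Ioi a, x ^ 2 * gp x = a * gp a + Qf a := by
  have hder : ∀ x ∈ Set.Ici a, HasDerivAt (fun x => -(x * gp x)) (x ^ 2 * gp x - gp x) x := by
    intro x _
    have := ((hasDerivAt_id x).fun_mul (hasDerivAt_gp x)).fun_neg
    exact this.congr_deriv (by change -(1 * gp x + x * (-x * gp x)) = _; ring)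
  have hint : IntegrableOn (fun x => x ^ 2 * gp x - gp x) (Set.Ioi a) :=
    (integrable_x2gp.sub integrable_gp).integrableOn
  have htend : Tendsto (fun x => -(x * gp x)) atTop (nhds 0) := by
    simpa using tendsto_xgp_atTop.neg
  have := integral_Ioi_of_hasDerivAt_of_tendsto' hder hint htend
  have hsplit : ∫ x in Set.Ioi a, (x ^ 2 * gp x - gp x)
      = (∫ x in Set.Ioi a, x ^ 2 * gp x) - Qf a :=
    integral_sub integrable_x2gp.integrableOn integrable_gp.integrableOn
  rw [hsplit] at this
  have : (∫ x in Set.Ioi a, x ^ 2 * gp x) - Qf a = a * gp a := by rw [this]; ring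
  linarith

lemma even_symm (f : ℝ → ℝ) (hf : ∀ x, f (-x) = f x) (a : ℝ) :
    ∫ x in Set.Iio (-a), f x = ∫ x in Set.Ioi a, f x := by
  rw [setIntegral_congr_set Iio_ae_eq_Iic]
  have h1 : ∫ x in Set.Iic (-a), f x = ∫ x in Set.Iic (-a), f (-x) := by
    congr 1; funext x; rw [hf]
  rw [h1, integral_comp_neg_Iic, neg_neg]

lemma total_gp : ∫ x, gp x = 1 := by
  rw [← gp_eq_pdf]; exact integral_gaussianPDFReal_eq_one 0 one_ne_zero

lemma Qf_zero : Qf 0 = 1 / 2 := by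
  have h1 : (∫ x in Set.Iic (0:ℝ), gp x) + Qf 0 = 1 := by
    rw [Qf, ← compl_Iic, integral_add_compl measurableSet_Iic integrable_gp, total_gp]
  have h2 : (∫ x in Set.Iic (0:ℝ), gp x) = Qf 0 := by
    rw [← setIntegral_congr_set Iio_ae_eq_Iic,
      show (0:ℝ) = -0 by norm_num, even_symm gp gp_even, Qf, neg_zero]
  linarith

lemma total_x2gp : ∫ x, x ^ 2 * gp x = 1 := by
  have h1 : (∫ x in Set.Iic (0:ℝ), x ^ 2 * gp x) + ∫ x in Set.Ioi (0:ℝ), x ^ 2 * gp x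
      = ∫ x, x ^ 2 * gp x := by
    rw [← compl_Iic, integral_add_compl measurableSet_Iic integrable_x2gp]
  have h2 : (∫ x in Set.Iic (0:ℝ), x ^ 2 * gp x) = ∫ x in Set.Ioi (0:ℝ), x ^ 2 * gp x := by
    rw [← setIntegral_congr_set Iio_ae_eq_Iic,
      show (0:ℝ) = -0 by norm_num,
      even_symm (fun x => x ^ 2 * gp x) (fun x => by simp only [gp_even, neg_sq]), neg_zero]
  have h3 := M2_eq 0
  rw [Qf_zero] at h3
  simp only [zero_mul, zero_add] at h3
  linarith

lemma Icc_x2gp (a : ℝ) (ha : 0 ≤ a) :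
    ∫ x in Set.Icc (-a) a, x ^ 2 * gp x = 1 - 2 * (a * gp a + Qf a) := by
  have hsplit1 : (∫ x in Set.Iic a, x ^ 2 * gp x) + ∫ x in Set.Ioi a, x ^ 2 * gp x
      = ∫ x, x ^ 2 * gp x := by
    rw [← compl_Iic, integral_add_compl measurableSet_Iic integrable_x2gp]
  have hunion : Set.Iio (-a) ∪ Set.Icc (-a) a = Set.Iic a := by
    ext x
    simp only [Set.mem_union, Set.mem_Iio, Set.mem_Icc, Set.mem_Iic]
    constructor
    · rintro (h | ⟨_, h⟩)
      · linarith
      · exact h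
    · intro h
      rcases lt_or_ge x (-a) with h' | h'
      · exact Or.inl h'
      · exact Or.inr ⟨h', h⟩
  have hsplit2 : (∫ x in Set.Iio (-a), x ^ 2 * gp x) + ∫ x in Set.Icc (-a) a, x ^ 2 * gp x
      = ∫ x in Set.Iic a, x ^ 2 * gp x := by
    rw [← hunion]
    exact (setIntegral_union (by rw [Set.disjoint_left]; intro x hx hx'; exact absurd hx'.1 (not_le.mpr hx)) measurableSet_Icc
      integrable_x2gp.integrableOn integrable_x2gp.integrableOn).symm
  have hsym : (∫ x in Set.Iio (-a), x ^ 2 * gp x) = ∫ x in Set.Ioi a, x ^ 2 * gp x :=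
    even_symm (fun x => x ^ 2 * gp x) (fun x => by simp only [gp_even, neg_sq]) a
  have hM2 := M2_eq a
  have ht := total_x2gp
  linarith

lemma integrable_shift (a : ℝ) : Integrable (fun x => (x - a) ^ 2 * gp x) := by
  have : (fun x => (x - a) ^ 2 * gp x)
      = fun x => x ^ 2 * gp x - (2 * a) * (x * gp x) + a ^ 2 * gp x := by
    funext x; ring
  rw [this]
  exact (integrable_x2gp.sub ((integrable_xgp.const_mul _))).add (integrable_gp.const_mul _)

lemma integrable_quad (b : ℝ) : Integrable (fun x => (x ^ 2 - b ^ 2) * gp x) := by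
  have : (fun x => (x ^ 2 - b ^ 2) * gp x) = fun x => x ^ 2 * gp x - b ^ 2 * gp x := by
    funext x; ring
  rw [this]
  exact integrable_x2gp.sub (integrable_gp.const_mul _)

lemma F_eq (a : ℝ) : (∫ h in Set.Ici a, (h - a) ^ 2 ∂stdGaussian)
    = (1 + a ^ 2) * Qf a - a * gp a := by
  rw [std_setIntegral _ measurableSet_Ici, ← setIntegral_congr_set Ioi_ae_eq_Ici]
  have h1 : (fun x => gp x * (x - a) ^ 2)
      = fun x => x ^ 2 * gp x - (2 * a) * (x * gp x) + a ^ 2 * gp x := by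
    funext x; ring
  rw [h1]
  have i1 : IntegrableOn (fun x => x ^ 2 * gp x - 2 * a * (x * gp x)) (Set.Ioi a) :=
    (integrable_x2gp.sub (integrable_xgp.const_mul (2 * a))).integrableOn
  have i2 : IntegrableOn (fun x => a ^ 2 * gp x) (Set.Ioi a) :=
    (integrable_gp.const_mul _).integrableOn
  rw [integral_add i1 i2,
    integral_sub integrable_x2gp.integrableOn ((integrable_xgp.const_mul _).integrableOn),
    integral_const_mul, integral_const_mul, M1_eq, M2_eq]
  unfold Qf
  ring

noncomputable def Gf (a : ℝ) : ℝ := (1 - a ^ 2) * Qf a + a * gp a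

lemma Gf_integral (a : ℝ) : Gf a = ∫ x in Set.Ioi a, (x ^ 2 - a ^ 2) * gp x := by
  have h1 : (fun x => (x ^ 2 - a ^ 2) * gp x) = fun x => x ^ 2 * gp x - a ^ 2 * gp x := by
    funext x; ring
  rw [h1, integral_sub integrable_x2gp.integrableOn ((integrable_gp.const_mul _).integrableOn),
    integral_const_mul, M2_eq]
  unfold Gf Qf; ring

lemma Gf_anti {b c : ℝ} (hb : 0 < b) (hbc : b ≤ c) : Gf c ≤ Gf b := by
  rw [Gf_integral, Gf_integral]
  have step1 : (∫ x in Set.Ioi c, (x ^ 2 - c ^ 2) * gp x)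
      ≤ ∫ x in Set.Ioi c, (x ^ 2 - b ^ 2) * gp x := by
    apply setIntegral_mono_on (integrable_quad c).integrableOn (integrable_quad b).integrableOn
      measurableSet_Ioi
    intro x _
    have h2 : b ^ 2 ≤ c ^ 2 := by nlinarith
    nlinarith [(gp_pos x).le, gp_pos x]
  have step2 : (∫ x in Set.Ioi c, (x ^ 2 - b ^ 2) * gp x)
      ≤ ∫ x in Set.Ioi b, (x ^ 2 - b ^ 2) * gp x := by
    apply setIntegral_mono_set (integrable_quad b).integrableOn
    · filter_upwards [ae_restrict_mem measurableSet_Ioi] with x hx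
      have hbx : b ≤ x := le_of_lt hx
      have h3 := (gp_pos x).le
      have h4 : 0 ≤ (x - b) * (x + b) := mul_nonneg (by linarith) (by linarith)
      simp only [Pi.zero_apply]
      nlinarith
    · exact HasSubset.Subset.eventuallyLE (Set.Ioi_subset_Ioi hbc)
  linarith

noncomputable def gfun (δ ρ P τ : ℝ) : ℝ := τ * δ / 2 + ρ / (2 * τ) + Ytilde P τ

lemma Dfun_eq (δ ρ P β τ : ℝ) : Dfun δ ρ P 0 β τ = β * gfun δ ρ P τ - β ^ 2 / 4 := by
  unfold Dfun gfun
  by_cases hβ : β = 0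
  · simp [hβ]
  · rw [if_neg hβ]
    have hY : Yfun P 0 β τ = β * Ytilde P τ := by
      unfold Yfun Ytilde
      rw [show 1 / τ + 2 * 0 / β = 1 / τ by rw [mul_zero, zero_div, add_zero]]
      rw [div_div_eq_mul_div, div_one]
      rw [show Real.sqrt P * (1 / τ) = Real.sqrt P / τ from mul_one_div _ _]
      ring
    rw [hY]; ring

lemma Ytilde_closed {P τ : ℝ} (hτ : τ ≠ 0) (hP : 0 ≤ P) :
    Ytilde P τ = (τ + P / τ) * Qf (Real.sqrt P / τ)
      - Real.sqrt P * gp (Real.sqrt P / τ) - τ / 2 := by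
  unfold Ytilde
  rw [F_eq]
  have hs : Real.sqrt P ^ 2 = P := Real.sq_sqrt hP
  have ha2 : (Real.sqrt P / τ) ^ 2 = P / τ ^ 2 := by rw [div_pow, hs]
  rw [ha2]
  generalize Real.sqrt P = s at hs ⊢
  rw [← hs]
  set q := Qf (s / τ)
  set b := gp (s / τ)
  field_simp

noncomputable def psiF (δ ρ P τ : ℝ) : ℝ :=
  δ / 2 - 1 / 2 - ρ / (2 * τ ^ 2) + Gf (Real.sqrt P / τ)

lemma hasDerivAt_gfun (δ ρ P : ℝ) (hP : 0 ≤ P) {τ : ℝ} (hτ : 0 < τ) :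
    HasDerivAt (gfun δ ρ P) (psiF δ ρ P τ) τ := by
  have hτ' : τ ≠ 0 := hτ.ne'
  have hs : Real.sqrt P ^ 2 = P := Real.sq_sqrt hP
  set gc : ℝ → ℝ := fun t => t * δ / 2 + ρ / 2 * t⁻¹ - t / 2
      + (t + P * t⁻¹) * Qf (Real.sqrt P * t⁻¹) - Real.sqrt P * gp (Real.sqrt P * t⁻¹) with hgc
  have heq : ∀ t : ℝ, t ≠ 0 → gfun δ ρ P t = gc t := by
    intro t ht
    rw [hgc]
    simp only
    rw [gfun, Ytilde_closed ht hP]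
    rw [show Real.sqrt P * t⁻¹ = Real.sqrt P / t from (div_eq_mul_inv _ _).symm]
    field_simp
    ring
  have ha : HasDerivAt (fun t : ℝ => Real.sqrt P * t⁻¹) (Real.sqrt P * (-(τ ^ 2)⁻¹)) τ :=
    (hasDerivAt_inv hτ').const_mul (Real.sqrt P)
  have hQ : HasDerivAt (fun t : ℝ => Qf (Real.sqrt P * t⁻¹))
      (-(gp (Real.sqrt P * τ⁻¹)) * (Real.sqrt P * (-(τ ^ 2)⁻¹))) τ :=
    (hasDerivAt_Qf _).comp τ ha
  have hB : HasDerivAt (fun t : ℝ => gp (Real.sqrt P * t⁻¹))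
      ((-(Real.sqrt P * τ⁻¹) * gp (Real.sqrt P * τ⁻¹)) * (Real.sqrt P * (-(τ ^ 2)⁻¹))) τ :=
    (hasDerivAt_gp _).comp τ ha
  have h1 : HasDerivAt (fun t : ℝ => t * δ / 2) (δ / 2) τ := by
    simpa using ((hasDerivAt_id τ).mul_const δ).div_const 2
  have h2 : HasDerivAt (fun t : ℝ => ρ / 2 * t⁻¹) (ρ / 2 * (-(τ ^ 2)⁻¹)) τ :=
    (hasDerivAt_inv hτ').const_mul (ρ / 2)
  have h3 : HasDerivAt (fun t : ℝ => t / 2) (1 / 2) τ := by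
    simpa using (hasDerivAt_id τ).div_const 2
  have h4 : HasDerivAt (fun t : ℝ => t + P * t⁻¹) (1 + P * (-(τ ^ 2)⁻¹)) τ :=
    (hasDerivAt_id τ).add ((hasDerivAt_inv hτ').const_mul P)
  have htot : HasDerivAt gc
      ((δ / 2 + ρ / 2 * (-(τ ^ 2)⁻¹) - 1 / 2
        + ((1 + P * (-(τ ^ 2)⁻¹)) * Qf (Real.sqrt P * τ⁻¹)
          + (τ + P * τ⁻¹) * (-(gp (Real.sqrt P * τ⁻¹)) * (Real.sqrt P * (-(τ ^ 2)⁻¹)))))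
        - Real.sqrt P * ((-(Real.sqrt P * τ⁻¹) * gp (Real.sqrt P * τ⁻¹))
            * (Real.sqrt P * (-(τ ^ 2)⁻¹)))) τ :=
    ((((h1.add h2).sub h3).add (h4.mul hQ)).sub (hB.const_mul (Real.sqrt P)))
  have hfin : HasDerivAt gc (psiF δ ρ P τ) τ := by
    convert htot using 1
    rw [psiF, Gf]
    rw [show Real.sqrt P * τ⁻¹ = Real.sqrt P / τ from (div_eq_mul_inv _ _).symm]
    have ha2 : (Real.sqrt P / τ) ^ 2 = P / τ ^ 2 := by rw [div_pow, hs]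
    rw [ha2]
    generalize Real.sqrt P = s at hs ⊢
    rw [← hs]
    set q := Qf (s / τ)
    set b := gp (s / τ)
    field_simp
    ring
  exact hfin.congr_of_eventuallyEq (by
    filter_upwards [eventually_ne_nhds hτ'] with t ht using heq t ht)

lemma psiF_strictMonoOn (δ ρ P : ℝ) (hρ : 0 < ρ) (hP : 0 < P) :
    StrictMonoOn (psiF δ ρ P) (Set.Ioi 0) := by
  intro τ1 h1 τ2 h2 h12
  simp only [Set.mem_Ioi] at h1 h2
  unfold psiF
  have hsP : 0 < Real.sqrt P := Real.sqrt_pos.2 hP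
  have hle : Real.sqrt P / τ2 ≤ Real.sqrt P / τ1 := by
    apply div_le_div_of_nonneg_left hsP.le h1 h12.le
  have hG : Gf (Real.sqrt P / τ1) ≤ Gf (Real.sqrt P / τ2) :=
    Gf_anti (div_pos hsP h2) hle
  have hρ' : ρ / (2 * τ2 ^ 2) < ρ / (2 * τ1 ^ 2) := by
    apply div_lt_div_of_pos_left hρ (by positivity)
    nlinarith
  linarith

lemma Icc_std (a : ℝ) (ha : 0 ≤ a) :
    (∫ h in Set.Icc (-a) a, h ^ 2 ∂stdGaussian) = 1 - 2 * (a * gp a + Qf a) := by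
  rw [std_setIntegral _ measurableSet_Icc]
  rw [show (fun x : ℝ => gp x * x ^ 2) = fun x => x ^ 2 * gp x from funext fun x => mul_comm _ _]
  exact Icc_x2gp a ha

lemma eq_iff_psi (δ ρ P : ℝ) (hP : 0 < P) (τ : ℝ) (hτ : 0 < τ) :
    (τ ^ 2 * δ - ρ =
        2 * P * (stdGaussian (Set.Ici (Real.sqrt P / τ))).toReal
        + τ ^ 2 * ∫ h in Set.Icc (-(Real.sqrt P / τ)) (Real.sqrt P / τ),
            h ^ 2 ∂stdGaussian) ↔ psiF δ ρ P τ = 0 := by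
  have hsP : 0 < Real.sqrt P := Real.sqrt_pos.2 hP
  have hapos : 0 < Real.sqrt P / τ := div_pos hsP hτ
  rw [std_measure_Ici, Icc_std _ hapos.le]
  have hs : Real.sqrt P ^ 2 = P := Real.sq_sqrt hP.le
  have ha2 : (Real.sqrt P / τ) ^ 2 = P / τ ^ 2 := by rw [div_pow, hs]
  have key : 2 * P * Qf (Real.sqrt P / τ)
      + τ ^ 2 * (1 - 2 * ((Real.sqrt P / τ) * gp (Real.sqrt P / τ) + Qf (Real.sqrt P / τ)))
      - (τ ^ 2 * δ - ρ) = -(2 * τ ^ 2) * psiF δ ρ P τ := by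
    rw [psiF, Gf, ha2]
    generalize Real.sqrt P = s at hs ⊢
    rw [← hs]
    set q := Qf (s / τ)
    set b := gp (s / τ)
    field_simp
    ring
  constructor
  · intro h
    have h0 : -(2 * τ ^ 2) * psiF δ ρ P τ = 0 := by rw [← key]; linarith
    rcases mul_eq_zero.1 h0 with h' | h'
    · exfalso; have : (0:ℝ) < 2 * τ ^ 2 := by positivity
      simp only [neg_eq_zero] at h'; linarith
    · exact h'
  · intro h
    have := key
    rw [h, mul_zero] at this
    linarith
/-- for `λ = 0` and `δ > 1`, `τ*` is the unique positive solution of the fixed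
point equation, `β* = max(0, τ*δ + ρ/τ* + 2Ỹ(τ*))`, and the optimal value equals
`(max(0, τ*δ/2 + ρ/(2τ*) + Ỹ(τ*)))²`. -/
theorem saddle_point_lambda_zero (δ ρ P : ℝ)
    (hδ : 1 < δ) (hρ : 0 < ρ) (hP : 0 < P)
    (βs τs : ℝ) (hsad : IsSaddle δ ρ P 0 βs τs) :
    (τs ^ 2 * δ - ρ =
        2 * P * (stdGaussian (Set.Ici (Real.sqrt P / τs))).toReal
        + τs ^ 2 * ∫ h in Set.Icc (-(Real.sqrt P / τs)) (Real.sqrt P / τs),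
            h ^ 2 ∂stdGaussian) ∧
    (∀ τ : ℝ, 0 < τ →
      τ ^ 2 * δ - ρ =
          2 * P * (stdGaussian (Set.Ici (Real.sqrt P / τ))).toReal
          + τ ^ 2 * ∫ h in Set.Icc (-(Real.sqrt P / τ)) (Real.sqrt P / τ),
              h ^ 2 ∂stdGaussian → τ = τs) ∧
    βs = max 0 (τs * δ + ρ / τs + 2 * Ytilde P τs) ∧
    Dfun δ ρ P 0 βs τs = (max 0 (τs * δ / 2 + ρ / (2 * τs) + Ytilde P τs)) ^ 2 := by
  obtain ⟨hβs, hτs, hmax, hmin⟩ := hsad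
  have hτs' : τs ≠ 0 := hτs.ne'
  -- positivity of g at τs
  have hFnn : 0 ≤ ∫ h in Set.Ici (Real.sqrt P / τs), (h - Real.sqrt P / τs) ^ 2 ∂stdGaussian :=
    setIntegral_nonneg measurableSet_Ici (fun x _ => sq_nonneg _)
  have hYlb : -(τs / 2) ≤ Ytilde P τs := by
    rw [Ytilde]
    nlinarith
  have hg : 0 < gfun δ ρ P τs := by
    rw [gfun]
    have h1 : 0 < ρ / (2 * τs) := by positivity
    nlinarith
  -- βs = 2 * g(τs)
  have hβ : βs = 2 * gfun δ ρ P τs := by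
    have h1 := hmax (2 * gfun δ ρ P τs) (by positivity)
    rw [Dfun_eq, Dfun_eq] at h1
    have h2 : (βs - 2 * gfun δ ρ P τs) ^ 2 ≤ 0 := by nlinarith
    have h3 : (βs - 2 * gfun δ ρ P τs) ^ 2 = 0 := le_antisymm h2 (sq_nonneg _)
    have := pow_eq_zero_iff (n := 2) (by norm_num) |>.mp h3
    linarith
  have hβpos : 0 < βs := by rw [hβ]; linarith
  -- τs minimizes g on Ioi 0
  have hglb : ∀ τ, 0 < τ → gfun δ ρ P τs ≤ gfun δ ρ P τ := by
    intro τ hτ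
    have := hmin τ hτ
    rw [Dfun_eq, Dfun_eq] at this
    have h2 : βs * gfun δ ρ P τs ≤ βs * gfun δ ρ P τ := by linarith
    exact le_of_mul_le_mul_left h2 hβpos
  have hloc : IsLocalMin (gfun δ ρ P) τs := by
    filter_upwards [Ioi_mem_nhds hτs] with τ hτ using hglb τ hτ
  have hcrit : psiF δ ρ P τs = 0 :=
    hloc.hasDerivAt_eq_zero (hasDerivAt_gfun δ ρ P hP.le hτs)
  refine ⟨?_, ?_, ?_, ?_⟩
  · exact (eq_iff_psi δ ρ P hP τs hτs).mpr hcrit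
  · intro τ hτ heq
    have hψ : psiF δ ρ P τ = 0 := (eq_iff_psi δ ρ P hP τ hτ).mp heq
    exact (psiF_strictMonoOn δ ρ P hρ hP).injOn hτ hτs (hψ.trans hcrit.symm)
  · have hval : τs * δ + ρ / τs + 2 * Ytilde P τs = 2 * gfun δ ρ P τs := by
      rw [gfun]; field_simp
    rw [hval, max_eq_right (by linarith), hβ]
  · have hval : τs * δ / 2 + ρ / (2 * τs) + Ytilde P τs = gfun δ ρ P τs := by
      rw [gfun]
    rw [hval, max_eq_right hg.le, Dfun_eq, hβ]
    ring
end

section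
/- Assume λ > 0, ρ > 0 and P > 0, and for each δ > 0 let (β*(δ), τ*(δ)) be the unique saddle point of max_{β ≥ 0} min_{τ > 0} D(β,τ) with parameter δ. Then, as δ → 0⁺, the ratio τ*(δ)/√(ρ/δ) converges to 1 and the ratio β*(δ)·(1 + 1/λ)/(2√(ρδ)) converges to 1. -/
open MeasureTheory ProbabilityTheory Filter

/-! ### Auxiliary material -/

open Real
open scoped ENNReal NNReal

set_option maxHeartbeats 1000000

section GaussianFacts

instance : IsProbabilityMeasure _root_.stdGaussian := by unfold _root_.stdGaussian; infer_instance

lemma stdGaussian_eq : _root_.stdGaussian = (volume : Measure ℝ).withDensity (gaussianPDF 0 1) := by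
  unfold _root_.stdGaussian
  rw [gaussianReal_of_var_ne_zero _ one_ne_zero]

lemma gaussianPDFReal_std (x : ℝ) :
    gaussianPDFReal 0 1 x = (√(2 * π))⁻¹ * rexp (-(1/2) * x ^ 2) := by
  rw [gaussianPDFReal]; norm_num; left; ring

lemma integrable_pow_stdG (n : ℕ) : Integrable (fun x : ℝ => x ^ n) stdGaussian := by
  rw [stdGaussian_eq, integrable_withDensity_iff (measurable_gaussianPDF 0 1)
    (Eventually.of_forall fun x => ENNReal.ofReal_lt_top)]
  have h : Integrable (fun x : ℝ => ((2 * π).sqrt)⁻¹ * (x ^ (n:ℝ) * Real.exp (-(1/2) * x ^ 2))) :=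
    (integrable_rpow_mul_exp_neg_mul_sq (by norm_num)
      (by exact_mod_cast neg_one_lt_zero.trans_le (Nat.cast_nonneg n))).const_mul _
  refine h.congr (Eventually.of_forall fun x => ?_)
  have hnn : 0 ≤ (√(2 * π))⁻¹ * rexp (-(1/2) * x ^ 2) := by positivity
  simp only [gaussianPDF_def, gaussianPDFReal_std, ENNReal.toReal_ofReal hnn]
  rw [Real.rpow_natCast]
  ring

lemma setIntegral_stdG (f : ℝ → ℝ) (s : Set ℝ) (hs : MeasurableSet s) :
    ∫ x in s, f x ∂stdGaussian = ∫ x in s, gaussianPDFReal 0 1 x * f x := by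
  rw [stdGaussian_eq, restrict_withDensity hs]
  have hd : (gaussianPDF 0 1) = fun x => (((gaussianPDFReal 0 1 x).toNNReal : ℝ≥0) : ℝ≥0∞) := by
    funext x; rw [gaussianPDF_def]; rfl
  rw [hd, integral_withDensity_eq_integral_smul
    ((measurable_gaussianPDFReal 0 1).real_toNNReal) f]
  refine setIntegral_congr_fun hs fun x _ => ?_
  rw [NNReal.smul_def, smul_eq_mul, Real.coe_toNNReal _ (gaussianPDFReal_nonneg _ _ _)]

lemma integral_sq_Ici_zero : ∫ x in Set.Ici (0:ℝ), x ^ 2 ∂stdGaussian = 1 / 2 := by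
  rw [setIntegral_stdG _ _ measurableSet_Ici, MeasureTheory.integral_Ici_eq_integral_Ioi]
  have h1 : ∀ x ∈ Set.Ioi (0:ℝ), gaussianPDFReal 0 1 x * x ^ 2
      = (√(2 * π))⁻¹ * (x ^ (2:ℝ) * rexp (-(1/2) * x ^ (2:ℝ))) := by
    intro x _
    rw [gaussianPDFReal_std, Real.rpow_two]
    ring
  rw [setIntegral_congr_fun measurableSet_Ioi h1, integral_const_mul,
    integral_rpow_mul_exp_neg_mul_rpow two_pos (by norm_num) (by norm_num : (0:ℝ) < 1/2)]
  have hG : Real.Gamma (((2:ℝ)+1)/2) = √π / 2 := by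
    rw [show ((2:ℝ)+1)/2 = 1/2 + 1 by norm_num, Real.Gamma_add_one (by norm_num),
      Real.Gamma_one_half_eq]
    ring
  have hr : ((1:ℝ)/2) ^ (-((2:ℝ)+1)/2) = 2 * √2 := by
    rw [show ((1:ℝ)/2) = 2⁻¹ by norm_num,
      Real.inv_rpow (by norm_num : (0:ℝ) ≤ 2), ← Real.rpow_neg (by norm_num : (0:ℝ) ≤ 2)]
    rw [show (-(-((2:ℝ)+1)/2)) = 1 + 1/2 by norm_num,
      Real.rpow_add (by norm_num : (0:ℝ) < 2), Real.rpow_one,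
      ← Real.sqrt_eq_rpow]
  rw [hG, hr, Real.sqrt_mul (by norm_num : (0:ℝ) ≤ 2)]
  have h2 : √2 > 0 := by positivity
  have hπ : √π > 0 := Real.sqrt_pos.mpr pi_pos
  field_simp

end GaussianFacts

/-- The tail functional `ε(x) = E[(H−x)² 1{H ≥ x}]`. -/
noncomputable def epsG (x : ℝ) : ℝ := ∫ h in Set.Ici x, (h - x) ^ 2 ∂stdGaussian

/-- Fourth moment of the standard Gaussian. -/
noncomputable def Mconst : ℝ := ∫ h, h ^ 4 ∂stdGaussian

noncomputable def C1 (ρ P lam : ℝ) : ℝ := 8 / lam ^ 2 + 32 * Mconst * ρ / (P * lam ^ 3)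

noncomputable def C2 (ρ P lam : ℝ) : ℝ :=
  ((1 + 1/lam) * C1 ρ P lam) * (2 + (1 + 1/lam) * C1 ρ P lam)

section EpsFacts

lemma Mconst_nonneg : 0 ≤ Mconst :=
  integral_nonneg fun x => by positivity

lemma integrable_sub_sq (x : ℝ) : Integrable (fun h : ℝ => (h - x) ^ 2) stdGaussian := by
  have h := ((integrable_pow_stdG 2).sub ((integrable_pow_stdG 1).const_mul (2 * x))).add
    (integrable_const (x ^ 2) : Integrable (fun _ : ℝ => x ^ 2) stdGaussian)
  exact h.congr (Eventually.of_forall fun h => by simp; ring)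

lemma epsG_nonneg (x : ℝ) : 0 ≤ epsG x :=
  setIntegral_nonneg measurableSet_Ici fun h _ => by positivity

lemma epsG_le_sq_int {x : ℝ} (hx : 0 ≤ x) :
    epsG x ≤ ∫ h in Set.Ici x, h ^ 2 ∂stdGaussian := by
  refine setIntegral_mono_on ((integrable_sub_sq x).integrableOn)
    ((integrable_pow_stdG 2).integrableOn) measurableSet_Ici fun h hh => ?_
  have : x ≤ h := hh
  nlinarith

lemma epsG_le_half {x : ℝ} (hx : 0 ≤ x) : epsG x ≤ 1 / 2 := by
  refine (epsG_le_sq_int hx).trans ?_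
  rw [← integral_sq_Ici_zero]
  refine setIntegral_mono_set ((integrable_pow_stdG 2).integrableOn) ?_ ?_
  · exact Eventually.of_forall fun h => by positivity
  · exact HasSubset.Subset.eventuallyLE (Set.Ici_subset_Ici.mpr hx)

lemma epsG_le_Mdiv {x : ℝ} (hx : 0 < x) : epsG x ≤ Mconst / x ^ 2 := by
  have h1 : epsG x ≤ ∫ h in Set.Ici x, h ^ 2 ∂stdGaussian := epsG_le_sq_int hx.le
  have h2 : ∫ h in Set.Ici x, h ^ 2 ∂stdGaussian
      ≤ ∫ h in Set.Ici x, (1 / x ^ 2) * h ^ 4 ∂stdGaussian := by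
    refine setIntegral_mono_on ((integrable_pow_stdG 2).integrableOn)
      (((integrable_pow_stdG 4).const_mul _).integrableOn) measurableSet_Ici fun h hh => ?_
    have hxh : x ≤ h := hh
    rw [div_mul_eq_mul_div, one_mul, le_div_iff₀ (by positivity)]
    have hx2 : x ^ 2 ≤ h ^ 2 := by nlinarith
    nlinarith [sq_nonneg h]
  have h3 : ∫ h in Set.Ici x, (1 / x ^ 2) * h ^ 4 ∂stdGaussian ≤ (1 / x ^ 2) * Mconst := by
    rw [integral_const_mul]
    refine mul_le_mul_of_nonneg_left ?_ (by positivity)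
    exact setIntegral_le_integral (integrable_pow_stdG 4)
      (Eventually.of_forall fun h => by positivity)
  calc epsG x ≤ _ := h1
    _ ≤ _ := h2
    _ ≤ (1 / x ^ 2) * Mconst := h3
    _ = Mconst / x ^ 2 := by ring

end EpsFacts

lemma Yfun_eq (P lam β τ : ℝ) :
    Yfun P lam β τ = (β / (1 / τ + 2 * lam / β)) *
      (epsG (Real.sqrt P * (1 / τ + 2 * lam / β)) - 1 / 2) := rfl

section Ybounds
variable {P lam β τ : ℝ} (hP : 0 < P) (hlam : 0 < lam) (hβ : 0 < β) (hτ : 0 < τ)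
include hlam hβ hτ

lemma alpha_pos : 0 < 1 / τ + 2 * lam / β := by positivity

lemma div_alpha_le : β / (1 / τ + 2 * lam / β) ≤ β ^ 2 / (2 * lam) := by
  have h1 : 2 * lam / β ≤ 1 / τ + 2 * lam / β := le_add_of_nonneg_left (by positivity)
  have h2 : 0 < 2 * lam / β := by positivity
  calc β / (1 / τ + 2 * lam / β) ≤ β / (2 * lam / β) :=
        div_le_div_of_nonneg_left hβ.le h2 h1
    _ = β ^ 2 / (2 * lam) := by field_simp

lemma Yfun_lb : -(β ^ 2 / (4 * lam)) ≤ Yfun P lam β τ := by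
  have hα := alpha_pos hlam hβ hτ
  have hda := div_alpha_le hlam hβ hτ
  have hd0 : 0 ≤ β / (1 / τ + 2 * lam / β) := by positivity
  have he := epsG_nonneg (Real.sqrt P * (1 / τ + 2 * lam / β))
  rw [Yfun_eq]
  have e2 : β ^ 2 / (4 * lam) = β ^ 2 / (2 * lam) / 2 := by ring
  nlinarith [mul_nonneg hd0 he]

lemma Yfun_le_zero : Yfun P lam β τ ≤ 0 := by
  have hα := alpha_pos hlam hβ hτ
  have hd0 : 0 ≤ β / (1 / τ + 2 * lam / β) := by positivity
  have he : epsG (Real.sqrt P * (1 / τ + 2 * lam / β)) ≤ 1 / 2 :=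
    epsG_le_half (by positivity)
  rw [Yfun_eq]
  exact mul_nonpos_of_nonneg_of_nonpos hd0 (by linarith)

include hP in
lemma Yfun_ub : Yfun P lam β τ ≤
    -(β ^ 2 / (4 * lam)) + β ^ 3 / (8 * lam ^ 2 * τ) + Mconst * β ^ 4 / (8 * P * lam ^ 3) := by
  have hα := alpha_pos hlam hβ hτ
  set α := 1 / τ + 2 * lam / β with hαdef
  have hsP : 0 < Real.sqrt P := Real.sqrt_pos.mpr hP
  have hx : 0 < Real.sqrt P * α := by positivity
  have hαlb : 2 * lam / β ≤ α := by
    rw [hαdef]; exact le_add_of_nonneg_left (by positivity)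
  have he1 : epsG (Real.sqrt P * α) ≤ Mconst / (Real.sqrt P * α) ^ 2 := epsG_le_Mdiv hx
  have hsq : (Real.sqrt P * α) ^ 2 = P * α ^ 2 := by
    rw [mul_pow, Real.sq_sqrt hP.le]
  have he2 : Mconst / (Real.sqrt P * α) ^ 2 ≤ Mconst * β ^ 2 / (4 * P * lam ^ 2) := by
    rw [hsq]
    have h1 : (2 * lam / β) ^ 2 ≤ α ^ 2 := pow_le_pow_left₀ (by positivity) hαlb 2
    have h2 : 4 * P * lam ^ 2 / β ^ 2 ≤ P * α ^ 2 := by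
      calc 4 * P * lam ^ 2 / β ^ 2 = P * (2 * lam / β) ^ 2 := by field_simp; ring
        _ ≤ P * α ^ 2 := by nlinarith
    calc Mconst / (P * α ^ 2) ≤ Mconst / (4 * P * lam ^ 2 / β ^ 2) :=
          div_le_div_of_nonneg_left Mconst_nonneg (by positivity) h2
      _ = Mconst * β ^ 2 / (4 * P * lam ^ 2) := by field_simp
  have hkey : β ^ 2 / (2 * lam) - β ^ 3 / (4 * lam ^ 2 * τ) ≤ β / α := by
    have hαval : α = (β + 2 * lam * τ) / (β * τ) := by
      rw [hαdef, eq_div_iff (by positivity : β * τ ≠ 0)]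
      field_simp
    have hden : 0 < β + 2 * lam * τ := by positivity
    rw [hαval, div_div_eq_mul_div]
    have hid : β * (β * τ) / (β + 2 * lam * τ) -
        (β ^ 2 / (2 * lam) - β ^ 3 / (4 * lam ^ 2 * τ))
        = β ^ 4 / (4 * lam ^ 2 * τ * (β + 2 * lam * τ)) := by
      field_simp
      ring
    nlinarith [hid, div_nonneg (by positivity : (0:ℝ) ≤ β ^ 4)
      (by positivity : (0:ℝ) ≤ 4 * lam ^ 2 * τ * (β + 2 * lam * τ))]
  have hda := div_alpha_le hlam hβ hτ
  have hd0 : 0 ≤ β / α := by positivity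
  have he0 := epsG_nonneg (Real.sqrt P * α)
  rw [Yfun_eq, ← hαdef, mul_sub]
  have t1 : β / α * epsG (Real.sqrt P * α)
      ≤ β ^ 2 / (2 * lam) * (Mconst * β ^ 2 / (4 * P * lam ^ 2)) :=
    mul_le_mul hda (he1.trans he2) he0 (by positivity)
  have t2 : (β ^ 2 / (2 * lam) - β ^ 3 / (4 * lam ^ 2 * τ)) * (1/2) ≤ β / α * (1 / 2) :=
    mul_le_mul_of_nonneg_right hkey (by norm_num)
  have e1 : β ^ 2 / (2 * lam) * (Mconst * β ^ 2 / (4 * P * lam ^ 2))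
      = Mconst * β ^ 4 / (8 * P * lam ^ 3) := by ring
  have e2 : (β ^ 2 / (2 * lam) - β ^ 3 / (4 * lam ^ 2 * τ)) * (1/2)
      = β ^ 2 / (4 * lam) - β ^ 3 / (8 * lam ^ 2 * τ) := by ring
  linarith [t1, t2]

end Ybounds

lemma Dfun_zero (δ ρ P lam τ : ℝ) : Dfun δ ρ P lam 0 τ = 0 := if_pos rfl

lemma Dfun_of_ne {β : ℝ} (δ ρ P lam τ : ℝ) (hβ : β ≠ 0) :
    Dfun δ ρ P lam β τ
      = τ * β * δ / 2 + ρ * β / (2 * τ) - β ^ 2 / 4 + Yfun P lam β τ := if_neg hβ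

lemma C1_nonneg {ρ P lam : ℝ} (hρ : 0 < ρ) (hP : 0 < P) (hlam : 0 < lam) :
    0 ≤ C1 ρ P lam := by
  have := Mconst_nonneg; unfold C1; positivity

lemma C2_nonneg {ρ P lam : ℝ} (hρ : 0 < ρ) (hP : 0 < P) (hlam : 0 < lam) :
    0 ≤ C2 ρ P lam := by
  have h1 := C1_nonneg hρ hP hlam
  have h2 : (0:ℝ) ≤ 1 + 1/lam := by positivity
  have h3 : 0 ≤ (1 + 1/lam) * C1 ρ P lam := mul_nonneg h2 h1
  unfold C2
  nlinarith [h3]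

lemma saddle_key {ρ P lam δ b t : ℝ} (hρ : 0 < ρ) (hP : 0 < P) (hlam : 0 < lam)
    (hδ : 0 < δ) (hδ1 : δ ≤ 1) (hsad : IsSaddle δ ρ P lam b t) :
    (b * (1 + 1 / lam) / (2 * Real.sqrt (ρ * δ)) - 1) ^ 2 ≤ (1 + 1/lam) * C1 ρ P lam * δ ∧
    (t / Real.sqrt (ρ / δ) - 1) ^ 2 ≤ C2 ρ P lam * δ := by
  obtain ⟨hb0, ht, hmax, hmin⟩ := hsad
  set sρ := Real.sqrt ρ with hsρdef
  set sd := Real.sqrt δ with hsddef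
  have hsρ : 0 < sρ := Real.sqrt_pos.mpr hρ
  have hsd : 0 < sd := Real.sqrt_pos.mpr hδ
  have hsρ2 : sρ ^ 2 = ρ := Real.sq_sqrt hρ.le
  have hsd2 : sd ^ 2 = δ := Real.sq_sqrt hδ.le
  have hsδ : Real.sqrt (ρ * δ) = sρ * sd := Real.sqrt_mul hρ.le δ
  have hT : Real.sqrt (ρ / δ) = sρ / sd := Real.sqrt_div hρ.le δ
  set sδ : ℝ := sρ * sd with hsδdef
  set T : ℝ := sρ / sd with hTdef
  set k : ℝ := 1 + 1 / lam with hkdef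
  set A : ℝ := t * δ / 2 + ρ / (2 * t) with hAdef
  clear_value sδ T k A
  have hsδ0 : 0 < sδ := by rw [hsδdef]; positivity
  have hT0 : 0 < T := by rw [hTdef]; positivity
  have hk0 : 0 < k := by rw [hkdef]; positivity
  have hC1 : 0 ≤ C1 ρ P lam := C1_nonneg hρ hP hlam
  have hA0 : 0 < A := by rw [hAdef]; positivity
  have hAs : sδ ≤ A := by
    rw [← sub_nonneg]
    have e : A - sδ = (sd ^ 2 * t - sρ * sd) ^ 2 / (2 * t * sd ^ 2) := by
      rw [hAdef, hsδdef, ← hsρ2, ← hsd2]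
      field_simp
      ring
    rw [e]; positivity
  set V : ℝ := Dfun δ ρ P lam b t with hVdef
  set βhat : ℝ := 2 / k * A with hβhatdef
  clear_value V βhat
  have hβhat0 : 0 < βhat := by rw [hβhatdef]; positivity
  have hV1 : A ^ 2 / k ≤ V := by
    have hmax' := hmax βhat hβhat0.le
    rw [Dfun_of_ne _ _ _ _ _ hβhat0.ne'] at hmax'
    have hY := Yfun_lb (P := P) hlam hβhat0 ht
    have e1 : t * βhat * δ / 2 + ρ * βhat / (2 * t) = βhat * A := by rw [hAdef]; ring
    have e2 : βhat * A - βhat ^ 2 / 4 - βhat ^ 2 / (4 * lam) = A ^ 2 / k := by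
      rw [hβhatdef, hkdef]; field_simp; ring
    linarith only [hmax', hY, e1, e2]
  have hV2 : sδ ^ 2 / k ≤ V := by
    have h1 : sδ ^ 2 ≤ A ^ 2 := pow_le_pow_left₀ hsδ0.le hAs 2
    have h2 : sδ ^ 2 / k ≤ A ^ 2 / k := by gcongr
    linarith only [h2, hV1]
  have hVpos : 0 < V := lt_of_lt_of_le (by positivity) hV2
  have hbpos : 0 < b := by
    rcases hb0.lt_or_eq with h | h
    · exact h
    · exfalso
      rw [hVdef, ← h, Dfun_zero] at hVpos
      exact lt_irrefl 0 hVpos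
  have hAT : T * δ / 2 + ρ / (2 * T) = sδ := by
    rw [hTdef, hsδdef, ← hsρ2, ← hsd2]
    field_simp
    ring
  have hmin' := hmin T hT0
  rw [Dfun_of_ne _ _ _ _ _ hbpos.ne'] at hmin'
  have eT : T * b * δ / 2 + ρ * b / (2 * T) = b * sδ := by
    rw [← hAT]; ring
  have hcrude : V ≤ b * sδ - b ^ 2 / 4 := by
    have hY0 := Yfun_le_zero (P := P) hlam hbpos hT0
    linarith only [hmin', eT, hY0]
  have hble : b ≤ 4 * sδ := by
    have hqq : b ^ 2 / 4 ≤ b * sδ := by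
      have h0 : (0:ℝ) < sδ ^ 2 / k := by positivity
      linarith only [hV2, hcrude, h0]
    nlinarith only [hqq, hbpos]
  have hYr := Yfun_ub hP hlam hbpos hT0
  have hb3 : b ^ 3 ≤ 64 * sδ ^ 3 := by
    calc b ^ 3 ≤ (4 * sδ) ^ 3 := pow_le_pow_left₀ hbpos.le hble 3
      _ = 64 * sδ ^ 3 := by ring
  have hb4 : b ^ 4 ≤ 256 * sδ ^ 4 := by
    calc b ^ 4 ≤ (4 * sδ) ^ 4 := pow_le_pow_left₀ hbpos.le hble 4
      _ = 256 * sδ ^ 4 := by ring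
  have herr1 : b ^ 3 / (8 * lam ^ 2 * T) ≤ sδ ^ 2 * δ * (8 / lam ^ 2) := by
    have h1 : b ^ 3 / (8 * lam ^ 2 * T) ≤ 64 * sδ ^ 3 / (8 * lam ^ 2 * T) := by gcongr
    have h2 : 64 * sδ ^ 3 / (8 * lam ^ 2 * T) = sδ ^ 2 * δ * (8 / lam ^ 2) := by
      rw [hsδdef, hTdef, ← hsd2]
      field_simp
      ring
    linarith only [h1, h2]
  have herr2 : Mconst * b ^ 4 / (8 * P * lam ^ 3)
      ≤ sδ ^ 2 * δ * (32 * Mconst * ρ / (P * lam ^ 3)) := by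
    have h1 : Mconst * b ^ 4 / (8 * P * lam ^ 3)
        ≤ Mconst * (256 * sδ ^ 4) / (8 * P * lam ^ 3) := by
      gcongr
      exact Mconst_nonneg
    have h2 : Mconst * (256 * sδ ^ 4) / (8 * P * lam ^ 3)
        = sδ ^ 2 * δ * (32 * Mconst * ρ / (P * lam ^ 3)) := by
      rw [hsδdef, ← hsd2, ← hsρ2]
      field_simp
      ring
    linarith only [h1, h2]
  have hrefV : V ≤ b * sδ - k / 4 * b ^ 2 + sδ ^ 2 * δ * C1 ρ P lam := by
    have ek : b ^ 2 / 4 + b ^ 2 / (4 * lam) = k / 4 * b ^ 2 := by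
      rw [hkdef]; field_simp
    have hC1e : sδ ^ 2 * δ * C1 ρ P lam
        = sδ ^ 2 * δ * (8 / lam ^ 2) + sδ ^ 2 * δ * (32 * Mconst * ρ / (P * lam ^ 3)) := by
      unfold C1; ring
    linarith only [hmin', eT, hYr, ek, hC1e, herr1, herr2]
  have hsqid : b * sδ - k / 4 * b ^ 2 = sδ ^ 2 / k - k / 4 * (b - 2 * sδ / k) ^ 2 := by
    field_simp
    ring
  have hsq1 : (b - 2 * sδ / k) ^ 2 ≤ 4 / k * (sδ ^ 2 * δ * C1 ρ P lam) := by
    have h := hV2.trans hrefV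
    rw [hsqid] at h
    have h2 : k / 4 * (b - 2 * sδ / k) ^ 2 ≤ sδ ^ 2 * δ * C1 ρ P lam := by linarith only [h]
    calc (b - 2 * sδ / k) ^ 2 = 4 / k * (k / 4 * (b - 2 * sδ / k) ^ 2) := by
          field_simp
      _ ≤ 4 / k * (sδ ^ 2 * δ * C1 ρ P lam) :=
          mul_le_mul_of_nonneg_left h2 (by positivity)
  have hbconc : (b * k / (2 * sδ) - 1) ^ 2 ≤ k * C1 ρ P lam * δ := by
    have hid : (b * k / (2 * sδ) - 1) ^ 2 = k ^ 2 / (4 * sδ ^ 2) * (b - 2 * sδ / k) ^ 2 := by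
      field_simp
      ring
    have hid2 : k ^ 2 / (4 * sδ ^ 2) * (4 / k * (sδ ^ 2 * δ * C1 ρ P lam))
        = k * C1 ρ P lam * δ := by
      field_simp
    rw [hid, ← hid2]
    exact mul_le_mul_of_nonneg_left hsq1 (by positivity)
  have hAub : A ^ 2 ≤ sδ ^ 2 * (1 + k * C1 ρ P lam * δ) := by
    have h := hV1.trans hrefV
    rw [hsqid] at h
    have h3 : A ^ 2 / k ≤ sδ ^ 2 / k + sδ ^ 2 * δ * C1 ρ P lam := by
      have h4 : 0 ≤ k / 4 * (b - 2 * sδ / k) ^ 2 := by positivity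
      linarith only [h, h4]
    calc A ^ 2 = k * (A ^ 2 / k) := by field_simp
      _ ≤ k * (sδ ^ 2 / k + sδ ^ 2 * δ * C1 ρ P lam) :=
          mul_le_mul_of_nonneg_left h3 hk0.le
      _ = sδ ^ 2 * (1 + k * C1 ρ P lam * δ) := by field_simp
  set w : ℝ := t / T with hwdef
  clear_value w
  have hw0 : 0 < w := by rw [hwdef]; positivity
  have hAw : A = sδ * (w + 1 / w) / 2 := by
    rw [hAdef, hwdef, hTdef, hsδdef, ← hsρ2, ← hsd2]
    field_simp
  set q : ℝ := k * C1 ρ P lam * δ with hqdef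
  clear_value q
  have hq0 : 0 ≤ q := by
    rw [hqdef]; exact mul_nonneg (mul_nonneg hk0.le hC1) hδ.le
  have hv0 : 0 < 1 / w := by positivity
  have hww : w * (1 / w) = 1 := by field_simp
  have ha2 : 2 ≤ w + 1 / w := by nlinarith only [sq_nonneg (w - 1), hww, hw0]
  have haub : (w + 1 / w) ^ 2 ≤ 4 * (1 + q) := by
    have hA2 : A ^ 2 = sδ ^ 2 * (w + 1 / w) ^ 2 / 4 := by rw [hAw]; ring
    have h1 : sδ ^ 2 * (w + 1 / w) ^ 2 / 4 ≤ sδ ^ 2 * (1 + q) := by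
      rw [← hA2]; exact hAub
    have h3 := mul_le_mul_of_nonneg_right h1 (by positivity : (0:ℝ) ≤ 4 / sδ ^ 2)
    calc (w + 1 / w) ^ 2 = sδ ^ 2 * (w + 1 / w) ^ 2 / 4 * (4 / sδ ^ 2) := by
          field_simp
      _ ≤ sδ ^ 2 * (1 + q) * (4 / sδ ^ 2) := h3
      _ = 4 * (1 + q) := by field_simp
  have ha2' : w + 1 / w - 2 ≤ q := by nlinarith only [haub, ha2]
  have hwle : w ≤ 2 + q := by
    by_contra hcon
    push_neg at hcon
    have h0 : 2 + q < w + 1 / w := by linarith only [hcon, hv0]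
    have h1 : (2 + q) ^ 2 < (w + 1 / w) ^ 2 :=
      pow_lt_pow_left₀ h0 (by linarith only [hq0]) (by norm_num)
    nlinarith only [h1, haub, sq_nonneg q]
  have hqle : q ≤ k * C1 ρ P lam := by
    rw [hqdef]
    nlinarith only [mul_nonneg hk0.le hC1, hδ1, hδ]
  have hwid : (w - 1) ^ 2 = w * (w + 1 / w - 2) := by field_simp; ring
  have hfin : (w - 1) ^ 2 ≤ C2 ρ P lam * δ := by
    have hs1 : w * (w + 1 / w - 2) ≤ (2 + k * C1 ρ P lam) * q := by
      have hnn : 0 ≤ w + 1 / w - 2 := by linarith only [ha2]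
      have h8 : w * (w + 1 / w - 2) ≤ (2 + q) * q :=
        mul_le_mul hwle ha2' hnn (by linarith only [hq0])
      have h9 : 0 ≤ (k * C1 ρ P lam - q) * q := mul_nonneg (by linarith only [hqle]) hq0
      nlinarith only [h8, h9]
    have hs2 : (2 + k * C1 ρ P lam) * q = C2 ρ P lam * δ := by
      rw [hqdef, hkdef]; unfold C2; ring
    rw [hwid]
    linarith only [hs1, hs2]
  constructor
  · rw [hsδ]
    exact hbconc
  · rw [hT, ← hwdef]
    exact hfin

lemma tendsto_of_sq_le {f : ℝ → ℝ} {c : ℝ} (hc : 0 ≤ c)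
    (h : ∀ δ : ℝ, 0 < δ → δ ≤ 1 → (f δ - 1) ^ 2 ≤ c * δ) :
    Tendsto f (nhdsWithin 0 (Set.Ioi 0)) (nhds 1) := by
  have h0 : Tendsto (fun δ : ℝ => Real.sqrt c * Real.sqrt δ)
      (nhdsWithin 0 (Set.Ioi 0)) (nhds 0) := by
    have h1 : Tendsto Real.sqrt (nhds 0) (nhds 0) := by
      simpa using Real.continuous_sqrt.tendsto 0
    have h2 : Tendsto (fun δ : ℝ => Real.sqrt δ) (nhdsWithin 0 (Set.Ioi 0)) (nhds 0) :=
      h1.mono_left nhdsWithin_le_nhds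
    simpa using h2.const_mul (Real.sqrt c)
  have hb : ∀ᶠ δ in nhdsWithin (0:ℝ) (Set.Ioi 0),
      ‖f δ - 1‖ ≤ Real.sqrt c * Real.sqrt δ := by
    filter_upwards [Ioc_mem_nhdsGT_of_mem (Set.left_mem_Ico.mpr zero_lt_one)] with δ hδ
    have h3 := h δ hδ.1 hδ.2
    rw [Real.norm_eq_abs, ← Real.sqrt_sq_eq_abs, ← Real.sqrt_mul hc]
    exact Real.sqrt_le_sqrt h3
  have h4 : Tendsto (fun δ => f δ - 1) (nhdsWithin 0 (Set.Ioi 0)) (nhds 0) :=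
    squeeze_zero_norm' hb h0
  have h5 := h4.add (tendsto_const_nhds (x := (1:ℝ)))
  simpa using h5

/-- for `λ > 0`, as `δ → 0⁺`, `τ*(δ)/√(ρ/δ) → 1` and
`β*(δ)(1 + 1/λ)/(2√(ρδ)) → 1`. -/
theorem saddle_point_limit_delta_zero (ρ P lam : ℝ)
    (hρ : 0 < ρ) (hP : 0 < P) (hlam : 0 < lam)
    (βs τs : ℝ → ℝ)
    (hsad : ∀ δ : ℝ, 0 < δ → IsSaddle δ ρ P lam (βs δ) (τs δ)) :
    Tendsto (fun δ => τs δ / Real.sqrt (ρ / δ)) (nhdsWithin 0 (Set.Ioi 0)) (nhds 1) ∧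
    Tendsto (fun δ => βs δ * (1 + 1 / lam) / (2 * Real.sqrt (ρ * δ)))
      (nhdsWithin 0 (Set.Ioi 0)) (nhds 1) := by
  constructor
  · refine tendsto_of_sq_le (C2_nonneg hρ hP hlam) fun δ h1 h2 => ?_
    exact (saddle_key hρ hP hlam h1 h2 (hsad δ h1)).2
  · refine tendsto_of_sq_le (c := (1 + 1 / lam) * C1 ρ P lam)
      (mul_nonneg (by positivity) (C1_nonneg hρ hP hlam)) fun δ h1 h2 => ?_
    exact (saddle_key hρ hP hlam h1 h2 (hsad δ h1)).1
end

section
/- Assume λ ≥ 0, ρ > 0 and P > 0, and for each δ > 1 let (β*(δ), τ*(δ)) be the unique saddle point of max_{β ≥ 0} min_{τ > 0} D(β,τ) with parameter δ. Then, as δ → ∞, the ratio τ*(δ)/√(ρ/δ) converges to 1 and the ratio β*(δ)/(2√(ρδ)) converges to 1. -/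
open MeasureTheory ProbabilityTheory Filter

open Real Set
open scoped ENNReal NNReal

noncomputable section AuxProofs


instance : IsProbabilityMeasure stdGaussian := by
  unfold _root_.stdGaussian; infer_instance

lemma stdGaussian_pdf (x : ℝ) :
    gaussianPDFReal 0 1 x = (Real.sqrt (2 * π))⁻¹ * rexp (-(1/2) * x ^ 2) := by
  simp only [gaussianPDFReal, NNReal.coe_one, mul_one, sub_zero]
  ring_nf

lemma stdGaussian_setIntegral (f : ℝ → ℝ) {s : Set ℝ} (hs : MeasurableSet s) :
    ∫ x in s, f x ∂stdGaussian = ∫ x in s, f x * gaussianPDFReal 0 1 x := by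
  have h1 : _root_.stdGaussian = volume.withDensity (fun x => ((gaussianPDFReal 0 1 x).toNNReal : ℝ≥0∞)) := by
    rw [_root_.stdGaussian, gaussianReal_of_var_ne_zero 0 one_ne_zero]; rfl
  rw [h1, setIntegral_withDensity_eq_setIntegral_smul
    (by exact (measurable_gaussianPDFReal 0 1).real_toNNReal) f hs]
  apply setIntegral_congr_fun hs
  intro x _
  simp [NNReal.smul_def, Real.coe_toNNReal _ (gaussianPDFReal_nonneg 0 1 x), mul_comm]

lemma integrable_poly_stdGaussian (b c d : ℝ) :
    Integrable (fun x : ℝ => b * x ^ 2 + c * x + d) stdGaussian := by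
  have h1 : _root_.stdGaussian = volume.withDensity (fun x => ((gaussianPDFReal 0 1 x).toNNReal : ℝ≥0∞)) := by
    rw [_root_.stdGaussian, gaussianReal_of_var_ne_zero 0 one_ne_zero]; rfl
  rw [h1, integrable_withDensity_iff_integrable_smul
    (by exact (measurable_gaussianPDFReal 0 1).real_toNNReal)]
  have h2 : Integrable (fun x : ℝ => x ^ 2 * rexp (-(1/2) * x ^ 2)) := by
    have := integrable_rpow_mul_exp_neg_mul_sq (b := 1/2) (by norm_num) (s := 2) (by norm_num)
    refine this.congr ?_
    filter_upwards with x
    rw [Real.rpow_two]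
  have h1' : Integrable (fun x : ℝ => x * rexp (-(1/2) * x ^ 2)) :=
    integrable_mul_exp_neg_mul_sq (by norm_num)
  have h0 : Integrable (fun x : ℝ => rexp (-(1/2) * x ^ 2)) :=
    integrable_exp_neg_mul_sq (by norm_num)
  have k := (Real.sqrt (2 * π))⁻¹
  have : Integrable (fun x : ℝ =>
      (b * (Real.sqrt (2 * π))⁻¹) * (x ^ 2 * rexp (-(1/2) * x ^ 2))
      + ((c * (Real.sqrt (2 * π))⁻¹) * (x * rexp (-(1/2) * x ^ 2))
      + (d * (Real.sqrt (2 * π))⁻¹) * rexp (-(1/2) * x ^ 2))) :=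
    (h2.const_mul _).add ((h1'.const_mul _).add (h0.const_mul _))
  refine this.congr ?_
  filter_upwards with x
  rw [NNReal.smul_def, Real.coe_toNNReal _ (gaussianPDFReal_nonneg 0 1 x), stdGaussian_pdf,
    smul_eq_mul]
  ring

lemma stdGaussian_singleton (a : ℝ) : stdGaussian {a} = 0 :=
  gaussianReal_absolutelyContinuous 0 one_ne_zero (by simp)

lemma stdGaussian_sq_Ici_zero : ∫ x in Ici (0:ℝ), x ^ 2 ∂stdGaussian = 1/2 := by
  rw [integral_Ici_eq_integral_Ioi' (stdGaussian_singleton 0),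
    stdGaussian_setIntegral _ measurableSet_Ioi]
  have h1 : ∫ x in Ioi (0:ℝ), x ^ 2 * gaussianPDFReal 0 1 x
      = (Real.sqrt (2 * π))⁻¹ * ∫ x in Ioi (0:ℝ), x ^ (2:ℝ) * rexp (-(1/2) * x ^ (2:ℝ)) := by
    rw [← integral_const_mul]
    apply setIntegral_congr_fun measurableSet_Ioi
    intro x _
    simp only [stdGaussian_pdf, Real.rpow_two]
    ring
  rw [h1, integral_rpow_mul_exp_neg_mul_rpow (by norm_num) (by norm_num) (by norm_num)]
  have h2 : ((1:ℝ)/2) ^ (-((2:ℝ) + 1) / 2) = 2 * Real.sqrt 2 := by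
    rw [show (-((2:ℝ) + 1) / 2) = -(3/2) by norm_num, Real.rpow_neg (by norm_num),
      show ((1:ℝ)/2) = 2⁻¹ by norm_num, Real.inv_rpow (by norm_num), inv_inv,
      show ((3:ℝ)/2) = 1 + 1/2 by norm_num, Real.rpow_add (by norm_num), Real.rpow_one,
      ← Real.sqrt_eq_rpow]
  rw [h2, show (((2:ℝ)+1)/2) = 1/2 + 1 by norm_num, Real.Gamma_add_one (by norm_num),
    Real.Gamma_one_half_eq]
  rw [Real.sqrt_mul (by norm_num)]
  have hs2 : (0:ℝ) < Real.sqrt 2 := Real.sqrt_pos.mpr (by norm_num)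
  have hsp : (0:ℝ) < Real.sqrt π := Real.sqrt_pos.mpr Real.pi_pos
  field_simp

lemma integrable_sq_stdGaussian : Integrable (fun x : ℝ => x ^ 2) stdGaussian :=
  (integrable_poly_stdGaussian 1 0 0).congr (Filter.Eventually.of_forall fun x => by ring)

lemma integrable_id_stdGaussian : Integrable (fun x : ℝ => x) stdGaussian :=
  (integrable_poly_stdGaussian 0 1 0).congr (Filter.Eventually.of_forall fun x => by ring)

lemma integrable_sub_sq_stdGaussian (a : ℝ) :
    Integrable (fun x : ℝ => (x - a) ^ 2) stdGaussian :=
  (integrable_poly_stdGaussian 1 (-2*a) (a^2)).congr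
    (Filter.Eventually.of_forall fun x => by ring)

lemma sq_Ici_le_half {a : ℝ} (ha : 0 ≤ a) :
    ∫ x in Ici a, x ^ 2 ∂stdGaussian ≤ 1/2 := by
  rw [← stdGaussian_sq_Ici_zero]
  exact setIntegral_mono_set integrable_sq_stdGaussian.integrableOn
    (Filter.Eventually.of_forall fun x => sq_nonneg x)
    (HasSubset.Subset.eventuallyLE (Set.Ici_subset_Ici.mpr ha))

lemma g_le_half {a : ℝ} (ha : 0 ≤ a) :
    ∫ x in Ici a, (x - a) ^ 2 ∂stdGaussian ≤ 1/2 := by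
  have h1 : ∫ x in Ici a, (x - a) ^ 2 ∂stdGaussian ≤ ∫ x in Ici a, x ^ 2 ∂stdGaussian := by
    apply setIntegral_mono_on (integrable_sub_sq_stdGaussian a).integrableOn
      integrable_sq_stdGaussian.integrableOn measurableSet_Ici
    intro x hx
    have : a ≤ x := hx
    nlinarith
  linarith [sq_Ici_le_half ha]

lemma g_nonneg (a : ℝ) : 0 ≤ ∫ x in Ici a, (x - a) ^ 2 ∂stdGaussian :=
  setIntegral_nonneg measurableSet_Ici fun x _ => sq_nonneg _

lemma meas_le_one (s : Set ℝ) : (stdGaussian s).toReal ≤ 1 := by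
  have h := prob_le_one (μ := stdGaussian) (s := s)
  simpa using ENNReal.toReal_mono ENNReal.one_ne_top h

lemma id_Ici_le {a : ℝ} (ha : 0 ≤ a) : ∫ x in Ici a, x ∂stdGaussian ≤ 3/4 := by
  have hi1 : Integrable (fun x : ℝ => (1:ℝ)/2 + x^2/2) stdGaussian :=
    ((integrable_const _).add (integrable_sq_stdGaussian.div_const 2)).congr
      (Filter.Eventually.of_forall fun x => rfl)
  have h1 : ∫ x in Ici a, x ∂stdGaussian ≤ ∫ x in Ici a, ((1:ℝ)/2 + x^2/2) ∂stdGaussian := by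
    apply setIntegral_mono_on integrable_id_stdGaussian.integrableOn
      hi1.integrableOn measurableSet_Ici
    intro x _
    nlinarith [sq_nonneg (x - 1)]
  have h2 : ∫ x in Ici a, ((1:ℝ)/2 + x^2/2) ∂stdGaussian
      = ∫ x in Ici a, ((1:ℝ)/2) ∂stdGaussian + ∫ x in Ici a, x^2/2 ∂stdGaussian :=
    integral_add ((integrable_const _).integrableOn)
      ((integrable_sq_stdGaussian.div_const 2).integrableOn)
  have h3 : ∫ x in Ici a, ((1:ℝ)/2) ∂stdGaussian ≤ 1/2 := by
    rw [setIntegral_const]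
    have := meas_le_one (Ici a)
    rw [smul_eq_mul, measureReal_def]
    nlinarith [ENNReal.toReal_nonneg (a := stdGaussian (Ici a))]
  have h4 : ∫ x in Ici a, x^2/2 ∂stdGaussian ≤ 1/4 := by
    rw [integral_div]
    linarith [sq_Ici_le_half ha]
  linarith

lemma g_ge {a : ℝ} (ha : 0 ≤ a) :
    1/2 - 5/2 * a ≤ ∫ x in Ici a, (x - a) ^ 2 ∂stdGaussian := by
  rcases le_or_gt a 1 with h1 | h1
  · -- split Ici 0 = Ico 0 a ∪ Ici a
    have hsplit : ∫ x in Ici (0:ℝ), x ^ 2 ∂stdGaussian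
        = ∫ x in Ico 0 a, x ^ 2 ∂stdGaussian + ∫ x in Ici a, x ^ 2 ∂stdGaussian := by
      have hdisj : Disjoint (Set.Ico (0:ℝ) a) (Set.Ici a) :=
        Set.disjoint_left.mpr fun x hx hx2 => absurd hx2 (not_le.mpr hx.2)
      rw [← setIntegral_union hdisj measurableSet_Ici
        integrable_sq_stdGaussian.integrableOn integrable_sq_stdGaussian.integrableOn,
        Set.Ico_union_Ici_eq_Ici ha]
    have hIco : ∫ x in Ico 0 a, x ^ 2 ∂stdGaussian ≤ a := by
      have hm : ∫ x in Ico 0 a, x ^ 2 ∂stdGaussian ≤ ∫ x in Ico 0 a, a^2 ∂stdGaussian := by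
        apply setIntegral_mono_on integrable_sq_stdGaussian.integrableOn
          (integrable_const _).integrableOn measurableSet_Ico
        intro x hx
        nlinarith [hx.1, hx.2]
      rw [setIntegral_const, smul_eq_mul, measureReal_def] at hm
      have hle := meas_le_one (Ico 0 a)
      nlinarith [ENNReal.toReal_nonneg (a := stdGaussian (Ico 0 a)), sq_nonneg a]
    have hA : 1/2 - a ≤ ∫ x in Ici a, x ^ 2 ∂stdGaussian := by
      rw [stdGaussian_sq_Ici_zero] at hsplit
      linarith
    have hB := id_Ici_le ha
    have hmono : ∫ x in Ici a, (x^2 - 2*a*x) ∂stdGaussian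
        ≤ ∫ x in Ici a, (x - a) ^ 2 ∂stdGaussian := by
      have hi2 : Integrable (fun x : ℝ => x^2 - 2*a*x) stdGaussian :=
        (integrable_poly_stdGaussian 1 (-2*a) 0).congr
          (Filter.Eventually.of_forall fun x => by ring)
      apply setIntegral_mono_on hi2.integrableOn
        (integrable_sub_sq_stdGaussian a).integrableOn measurableSet_Ici
      intro x _
      nlinarith [sq_nonneg a]
    have hsub : ∫ x in Ici a, (x^2 - 2*a*x) ∂stdGaussian
        = ∫ x in Ici a, x^2 ∂stdGaussian - 2*a * ∫ x in Ici a, x ∂stdGaussian := by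
      have hi3 : Integrable (fun x : ℝ => 2*a*x) stdGaussian :=
        (integrable_poly_stdGaussian 0 (2*a) 0).congr
          (Filter.Eventually.of_forall fun x => by ring)
      rw [integral_sub integrable_sq_stdGaussian.integrableOn hi3.integrableOn]
      congr 1
      rw [← integral_const_mul]
    have h2a : 2*a * ∫ x in Ici a, x ∂stdGaussian ≤ 2*a*(3/4) := by
      apply mul_le_mul_of_nonneg_left hB (by linarith)
    linarith
  · have := g_nonneg a
    linarith

lemma Yfun_nonpos {P lam β τ : ℝ} (hP : 0 < P) (hlam : 0 ≤ lam) (hβ : 0 < β) (hτ : 0 < τ) :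
    Yfun P lam β τ ≤ 0 := by
  have hα : 0 < 1 / τ + 2 * lam / β := by positivity
  have ha : 0 ≤ Real.sqrt P * (1 / τ + 2 * lam / β) := by positivity
  have hg := g_le_half ha
  unfold Yfun
  have h1 : 0 ≤ β / (1 / τ + 2 * lam / β) := by positivity
  nlinarith

lemma Yfun_ge {P lam β τ : ℝ} (hP : 0 < P) (hlam : 0 ≤ lam) (hβ : 0 < β) (hτ : 0 < τ) :
    -(5/2 * Real.sqrt P) * β ≤ Yfun P lam β τ := by
  set α := 1 / τ + 2 * lam / β with hα_def
  have hα : 0 < α := by positivity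
  have ha : 0 ≤ Real.sqrt P * α := by positivity
  have hg := g_ge ha
  have h1 : 0 ≤ β / α := by positivity
  have h3 : (β/α) * (1/2 - 5/2 * (Real.sqrt P * α))
      ≤ (β/α) * (∫ x in Ici (Real.sqrt P * α), (x - Real.sqrt P * α) ^ 2 ∂stdGaussian) :=
    mul_le_mul_of_nonneg_left hg h1
  have hid : β / α * α = β := div_mul_cancel₀ β (ne_of_gt hα)
  have h4 : (β/α) * (1/2 - 5/2 * (Real.sqrt P * α))
      = (β/α) * (1/2) - 5/2 * Real.sqrt P * (β / α * α) := by ring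
  rw [hid] at h4
  have hY : Yfun P lam β τ
      = (β/α) * (∫ x in Ici (Real.sqrt P * α), (x - Real.sqrt P * α) ^ 2 ∂stdGaussian)
        - (β/α) * (1/2) := by
    unfold Yfun
    rw [← hα_def]
    ring
  linarith

lemma Dfun_bounds {δ ρ P lam β τ : ℝ} (hP : 0 < P) (hlam : 0 ≤ lam) (hβ : 0 < β) (hτ : 0 < τ) :
    β * (τ * δ / 2 + ρ / (2 * τ)) - β ^ 2 / 4 - (5/2 * Real.sqrt P) * β
      ≤ Dfun δ ρ P lam β τ
    ∧ Dfun δ ρ P lam β τ ≤ β * (τ * δ / 2 + ρ / (2 * τ)) - β ^ 2 / 4 := by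
  have h0 : Dfun δ ρ P lam β τ
      = τ * β * δ / 2 + ρ * β / (2 * τ) - β ^ 2 / 4 + Yfun P lam β τ := if_neg (ne_of_gt hβ)
  have halg : τ * β * δ / 2 + ρ * β / (2 * τ) = β * (τ * δ / 2 + ρ / (2 * τ)) := by ring
  have h1 := Yfun_nonpos hP hlam hβ hτ
  have h2 := Yfun_ge hP hlam hβ hτ
  constructor <;> (rw [h0, halg]; linarith)

set_option maxHeartbeats 2000000 in
lemma key_estimate {ρ P lam δ βv τv : ℝ} (hρ : 0 < ρ) (hP : 0 < P) (hlam : 0 ≤ lam)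
    (hδ : 1 < δ) (hCs : 2 * (5/2 * Real.sqrt P) + 1 < Real.sqrt (ρ * δ))
    (hsad : IsSaddle δ ρ P lam βv τv) :
    |τv / Real.sqrt (ρ / δ) - 1|
      ≤ Real.sqrt (2 * (5/2 * Real.sqrt P) / Real.sqrt (ρ * δ))
        + 2 * (5/2 * Real.sqrt P) / Real.sqrt (ρ * δ) ∧
    |βv / (2 * Real.sqrt (ρ * δ)) - 1|
      ≤ Real.sqrt (2 * (5/2 * Real.sqrt P) / Real.sqrt (ρ * δ))
        + 2 * (5/2 * Real.sqrt P) / Real.sqrt (ρ * δ) := by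
  obtain ⟨hβ0, hτ0, hmax, hmin⟩ := hsad
  set C : ℝ := 5/2 * Real.sqrt P with hC_def
  have hCpos : 0 < C := by positivity
  set s : ℝ := Real.sqrt (ρ * δ) with hs_def
  set t : ℝ := Real.sqrt (ρ / δ) with ht_def
  have hδ0 : (0:ℝ) < δ := by linarith
  have hs : 0 < s := Real.sqrt_pos.mpr (by positivity)
  have ht : 0 < t := Real.sqrt_pos.mpr (by positivity)
  have ht2 : t ^ 2 = ρ / δ := Real.sq_sqrt (by positivity)
  have hs2 : s ^ 2 = ρ * δ := Real.sq_sqrt (by positivity)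
  have hts' : (t * δ) ^ 2 = s ^ 2 := by rw [mul_pow, ht2, hs2]; field_simp
  have hts : t * δ = s := by
    have h2 := Real.sqrt_sq (by positivity : (0:ℝ) ≤ t * δ)
    rw [hts', Real.sqrt_sq hs.le] at h2
    exact h2.symm
  clear_value C s t
  
  have hρt : ρ = t ^ 2 * δ := by rw [ht2]; field_simp
  have hφt : t * δ / 2 + ρ / (2 * t) = s := by
    have hh : ρ / (2 * t) = t * δ / 2 := by
      rw [hρt]; field_simp
    rw [hh]; linarith
  have AMGM : ∀ τ : ℝ, 0 < τ → s ≤ τ * δ / 2 + ρ / (2 * τ) := by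
    intro τ hτ
    have heq : τ * δ / 2 + ρ / (2 * τ) - s = (τ ^ 2 * δ + ρ - 2 * s * τ) / (2 * τ) := by
      field_simp
    have hnum : 0 ≤ τ ^ 2 * δ + ρ - 2 * s * τ := by
      rw [← hts, hρt]
      nlinarith [mul_nonneg hδ0.le (sq_nonneg (τ - t))]
    nlinarith [div_nonneg hnum (by positivity : (0:ℝ) ≤ 2 * τ)]
  set u : ℝ := τv * δ / 2 + ρ / (2 * τv) with hu_def
  have hu : s ≤ u := AMGM τv hτ0
  set V : ℝ := Dfun δ ρ P lam βv τv with hV_def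
  clear_value u V
  have h2s : (0:ℝ) < 2 * s := by linarith
  have hD2s := (Dfun_bounds (δ := δ) (ρ := ρ) hP hlam h2s hτ0).1
  rw [← hu_def, ← hC_def] at hD2s
  have h1 : 2 * s * u - s ^ 2 - 2 * C * s ≤ V := by
    have hm := hmax (2 * s) (by positivity)
    nlinarith [hD2s, hm]
  have h1' : s ^ 2 - 2 * C * s ≤ V := by
    nlinarith [mul_le_mul_of_nonneg_left hu (by positivity : (0:ℝ) ≤ 2 * s)]
  have hβpos : 0 < βv := by
    rcases eq_or_lt_of_le hβ0 with h | h
    · exfalso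
      have hV0 : V = 0 := by
        rw [hV_def, ← h]
        unfold Dfun
        rw [if_pos rfl]
      rw [hV0] at h1'
      clear hmax hmin hV_def hD2s hV0
      nlinarith [h1', hCs, hCpos, hs]
    · exact h
  have hDβ := Dfun_bounds (δ := δ) (ρ := ρ) hP hlam hβpos hτ0
  rw [← hu_def, ← hC_def, ← hV_def] at hDβ
  have hDβt := (Dfun_bounds (δ := δ) (ρ := ρ) hP hlam hβpos ht).2
  rw [hφt] at hDβt
  have h3 : V ≤ βv * s - βv ^ 2 / 4 := by
    exact le_trans (hmin t ht) hDβt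
  clear hmax hmin hV_def hD2s hDβt
  have hu2 : u ≤ s + C := by nlinarith [hDβ.1, h3, hβpos]
  constructor
  · -- tau bound
    have heq2 : u - s = δ * (τv - t) ^ 2 / (2 * τv) := by
      rw [hu_def, ← hts, hρt]
      field_simp
      ring
    have hq2 : (τv - t) ^ 2 ≤ 2 * C * τv / δ := by
      rw [le_div_iff₀ hδ0]
      have h6 : δ * (τv - t) ^ 2 / (2 * τv) ≤ C := by rw [← heq2]; linarith
      have := (div_le_iff₀ (by positivity : (0:ℝ) < 2 * τv)).mp h6
      nlinarith
    have hq3 : (τv - t - C/δ) ^ 2 ≤ 2 * C * t / δ + (C/δ) ^ 2 := by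
      have hid : (τv - t - C/δ) ^ 2 - (2 * C * t / δ + (C/δ) ^ 2)
          = (τv - t) ^ 2 - 2 * C * τv / δ := by field_simp; ring
      linarith [hid]
    have habs1 : |τv - t - C/δ| ≤ Real.sqrt (2 * C * t / δ + (C/δ) ^ 2) := by
      have := Real.sqrt_le_sqrt hq3
      rwa [Real.sqrt_sq_eq_abs] at this
    have hsplit : Real.sqrt (2 * C * t / δ + (C/δ) ^ 2) ≤ Real.sqrt (2 * C * t / δ) + C/δ := by
      have h5 : 2 * C * t / δ + (C/δ) ^ 2 ≤ (Real.sqrt (2 * C * t / δ) + C/δ) ^ 2 := by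
        nlinarith [Real.sq_sqrt (by positivity : (0:ℝ) ≤ 2 * C * t / δ),
          Real.sqrt_nonneg (2 * C * t / δ), div_nonneg hCpos.le hδ0.le]
      have := Real.sqrt_le_sqrt h5
      rwa [Real.sqrt_sq (by positivity)] at this
    have habs2 : |τv - t| ≤ Real.sqrt (2 * C * t / δ) + 2 * C / δ := by
      have hCδ : (0:ℝ) ≤ C / δ := by positivity
      have h7 : |τv - t| ≤ |τv - t - C/δ| + C/δ := by
        calc |τv - t| = |(τv - t - C/δ) + C/δ| := by ring_nf
        _ ≤ |τv - t - C/δ| + |C/δ| := abs_add_le _ _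
        _ = |τv - t - C/δ| + C/δ := by rw [abs_of_nonneg hCδ]
      have h8 : Real.sqrt (2 * C * t / δ) + C/δ + C/δ
          = Real.sqrt (2 * C * t / δ) + 2 * C / δ := by ring
      linarith [le_trans habs1 hsplit]
    have hrw : τv / t - 1 = (τv - t) / t := by field_simp
    rw [hrw, abs_div, abs_of_pos ht, div_le_iff₀ ht]
    have hA : Real.sqrt (2 * C / s) * t = Real.sqrt (2 * C * t / δ) := by
      rw [← Real.sqrt_sq ht.le, ← Real.sqrt_mul (by positivity)]
      congr 1
      rw [← hts]
      field_simp
      simp [Real.sqrt_sq ht.le]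
    have hB : 2 * C / s * t = 2 * C / δ := by
      rw [← hts]; field_simp
    calc |τv - t| ≤ Real.sqrt (2 * C * t / δ) + 2 * C / δ := habs2
    _ = (Real.sqrt (2 * C / s) + 2 * C / s) * t := by rw [add_mul, hA, hB]
  · -- beta bound
    have hsq : (βv / 2 - u) ^ 2 ≤ (u - s) ^ 2 + 2 * C * s := by nlinarith [h1, hDβ.2]
    have hus : (u - s) ^ 2 ≤ C ^ 2 := by nlinarith
    have hsq2 : (βv / 2 - u) ^ 2 ≤ C ^ 2 + 2 * C * s := by linarith
    have habs3 : |βv / 2 - u| ≤ C + Real.sqrt (2 * C * s) := by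
      have h5 : C ^ 2 + 2 * C * s ≤ (C + Real.sqrt (2 * C * s)) ^ 2 := by
        nlinarith [Real.sq_sqrt (by positivity : (0:ℝ) ≤ 2 * C * s),
          Real.sqrt_nonneg (2 * C * s)]
      have h6 := Real.sqrt_le_sqrt (le_trans hsq2 h5)
      rwa [Real.sqrt_sq_eq_abs, Real.sqrt_sq (by positivity)] at h6
    have habs4 : |βv - 2 * s| ≤ 4 * C + 2 * Real.sqrt (2 * C * s) := by
      rw [abs_le] at habs3 ⊢
      constructor
      · nlinarith [habs3.1]
      · nlinarith [habs3.2]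
    have hrw : βv / (2 * s) - 1 = (βv - 2 * s) / (2 * s) := by field_simp
    rw [hrw, abs_div, abs_of_pos h2s, div_le_iff₀ h2s]
    have hA : Real.sqrt (2 * C / s) * s = Real.sqrt (2 * C * s) := by
      rw [← Real.sqrt_sq hs.le, ← Real.sqrt_mul (by positivity)]
      congr 1
      field_simp
      simp [Real.sqrt_sq hs.le]
    calc |βv - 2 * s| ≤ 4 * C + 2 * Real.sqrt (2 * C * s) := habs4
    _ = (Real.sqrt (2 * C / s) + 2 * C / s) * (2 * s) := by
      rw [add_mul, show Real.sqrt (2 * C / s) * (2 * s) = 2 * (Real.sqrt (2 * C / s) * s) by ring,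
        hA]
      field_simp
      ring


end AuxProofs

/-- for `λ ≥ 0`, as `δ → ∞`, `τ*(δ)/√(ρ/δ) → 1` and `β*(δ)/(2√(ρδ)) → 1`. -/
theorem saddle_point_limit_delta_infty (ρ P lam : ℝ)
    (hρ : 0 < ρ) (hP : 0 < P) (hlam : 0 ≤ lam)
    (βs τs : ℝ → ℝ)
    (hsad : ∀ δ : ℝ, 1 < δ → IsSaddle δ ρ P lam (βs δ) (τs δ)) :
    Tendsto (fun δ => τs δ / Real.sqrt (ρ / δ)) atTop (nhds 1) ∧
    Tendsto (fun δ => βs δ / (2 * Real.sqrt (ρ * δ))) atTop (nhds 1) := by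
  set C : ℝ := 5/2 * Real.sqrt P with hC_def
  have hsqrt_atTop : Tendsto Real.sqrt atTop atTop := by
    rw [tendsto_atTop_atTop]
    intro b
    refine ⟨max 0 (b^2), fun a ha => ?_⟩
    rcases le_or_gt b 0 with hb | hb
    · exact le_trans hb (Real.sqrt_nonneg a)
    · have hab : b^2 ≤ a := le_trans (le_max_right _ _) ha
      have h2 := Real.sqrt_le_sqrt hab
      rwa [Real.sqrt_sq hb.le] at h2
  have htend : Tendsto (fun δ : ℝ => Real.sqrt (ρ * δ)) atTop atTop :=
    hsqrt_atTop.comp (tendsto_id.const_mul_atTop hρ)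
  have hεa : Tendsto (fun δ : ℝ => 2 * C / Real.sqrt (ρ * δ)) atTop (nhds 0) :=
    tendsto_const_nhds.div_atTop htend
  have hεb : Tendsto (fun δ : ℝ => Real.sqrt (2 * C / Real.sqrt (ρ * δ))) atTop (nhds 0) := by
    have := hεa.sqrt
    simpa using this
  have hε : Tendsto
      (fun δ : ℝ => Real.sqrt (2 * C / Real.sqrt (ρ * δ)) + 2 * C / Real.sqrt (ρ * δ))
      atTop (nhds 0) := by
    simpa using hεb.add hεa
  have hev : ∀ᶠ δ : ℝ in atTop, 1 < δ ∧ 2 * C + 1 < Real.sqrt (ρ * δ) :=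
    (eventually_gt_atTop 1).and (htend.eventually_gt_atTop (2 * C + 1))
  constructor
  · have h0 : Tendsto (fun δ => τs δ / Real.sqrt (ρ / δ) - 1) atTop (nhds 0) := by
      refine squeeze_zero_norm' ?_ hε
      filter_upwards [hev] with δ hδ
      rw [Real.norm_eq_abs]
      exact (key_estimate hρ hP hlam hδ.1 hδ.2 (hsad δ hδ.1)).1
    have h1 := h0.add_const 1
    simpa using h1
  · have h0 : Tendsto (fun δ => βs δ / (2 * Real.sqrt (ρ * δ)) - 1) atTop (nhds 0) := by
      refine squeeze_zero_norm' ?_ hε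
      filter_upwards [hev] with δ hδ
      rw [Real.norm_eq_abs]
      exact (key_estimate hρ hP hlam hδ.1 hδ.2 (hsad δ hδ.1)).2
    have h1 := h0.add_const 1
    simpa using h1
end
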